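/- arXiv:1007.5319 — 4 statements merged into one kernel-verified Lean document; each statement's English description precedes it below -/
import Mathlib

section
/- Let n ≥ 1 and let Z' and Z'' be real symmetric n×n matrices with Z'' invertible. Define the 2n×2n block matrix 𝓛 = [[Z'' + Z'(Z'')⁻¹Z', Z'(Z'')⁻¹], [(Z'')⁻¹Z', (Z'')⁻¹]]. For any vectors F', F'' ∈ ℝⁿ, set G' = Z'F' − Z''F'' and let x = (F', −G') ∈ ℝ²ⁿ be the concatenated vector. Then xᵀ𝓛x = F'·(Z''F') + F''·(Z''F''). -/
open Matrix

/-- For real symmetric `Z'`, `Z''` with `Z''` invertible, the block matrix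
`𝓛 = [[Z'' + Z'(Z'')⁻¹Z', Z'(Z'')⁻¹], [(Z'')⁻¹Z', (Z'')⁻¹]]` satisfies
`x ⬝ 𝓛 x = F'·(Z''F') + F''·(Z''F'')` where `x = (F', −G')` and `G' = Z'F' − Z''F''`. -/
theorem stmt0 (n : ℕ) (hn : 1 ≤ n)
    (Z' Z'' : Matrix (Fin n) (Fin n) ℝ)
    (hZ' : Z'.IsSymm) (hZ'' : Z''.IsSymm) (hZ''inv : IsUnit Z'')
    (F' F'' : Fin n → ℝ)
    (G' : Fin n → ℝ) (hG' : G' = Z' *ᵥ F' - Z'' *ᵥ F'')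
    (𝓛 : Matrix (Fin n ⊕ Fin n) (Fin n ⊕ Fin n) ℝ)
    (h𝓛 : 𝓛 = Matrix.fromBlocks
      (Z'' + Z' * (Z'')⁻¹ * Z') (Z' * (Z'')⁻¹)
      ((Z'')⁻¹ * Z') (Z'')⁻¹)
    (x : Fin n ⊕ Fin n → ℝ) (hx : x = Sum.elim F' (-G')) :
    x ⬝ᵥ (𝓛 *ᵥ x) = F' ⬝ᵥ (Z'' *ᵥ F') + F'' ⬝ᵥ (Z'' *ᵥ F'') := by
  subst hG' h𝓛 hx
  have hd : IsUnit Z''.det := (Matrix.isUnit_iff_isUnit_det _).mp hZ''inv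
  have h1 : (Z'')⁻¹ * Z'' = 1 := Z''.nonsing_inv_mul hd
  rw [Matrix.fromBlocks_mulVec, sumElim_dotProduct_sumElim]
  have hbot : ((Z'')⁻¹ * Z') *ᵥ F' + (Z'')⁻¹ *ᵥ (-(Z' *ᵥ F' - Z'' *ᵥ F'')) = F'' := by
    rw [← Matrix.mulVec_mulVec, ← Matrix.mulVec_add]
    have : Z' *ᵥ F' + -(Z' *ᵥ F' - Z'' *ᵥ F'') = Z'' *ᵥ F'' := by abel
    rw [this, Matrix.mulVec_mulVec, h1, Matrix.one_mulVec]
  have htop : (Z'' + Z' * (Z'')⁻¹ * Z') *ᵥ F' + (Z' * (Z'')⁻¹) *ᵥ (-(Z' *ᵥ F' - Z'' *ᵥ F''))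
      = Z'' *ᵥ F' + Z' *ᵥ F'' := by
    rw [Matrix.add_mulVec, show (Z' * (Z'')⁻¹ * Z') *ᵥ F' = (Z' * (Z'')⁻¹) *ᵥ (Z' *ᵥ F')
        from (Matrix.mulVec_mulVec _ _ _).symm, add_assoc,
      ← Matrix.mulVec_add]
    have : Z' *ᵥ F' + -(Z' *ᵥ F' - Z'' *ᵥ F'') = Z'' *ᵥ F'' := by abel
    rw [this, Matrix.mulVec_mulVec, mul_assoc, h1, Matrix.mul_one]
  simp only [Sum.elim_comp_inl, Sum.elim_comp_inr]
  rw [hbot, htop, dotProduct_add]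
  have hcomm : F' ⬝ᵥ (Z' *ᵥ F'') = (Z' *ᵥ F') ⬝ᵥ F'' := by
    rw [Matrix.dotProduct_mulVec, ← Matrix.mulVec_transpose, hZ'.eq]
  rw [hcomm]
  simp [sub_dotProduct, neg_dotProduct]
  exact dotProduct_comm _ _
end

section
/- Let n ≥ 1, let Z' be a real symmetric n×n matrix and let Z'' be a real symmetric positive definite n×n matrix. Then the 2n×2n block matrix 𝓛 = [[Z'' + Z'(Z'')⁻¹Z', Z'(Z'')⁻¹], [(Z'')⁻¹Z', (Z'')⁻¹]] is symmetric positive definite. -/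
open Matrix

private lemma symm_dot {n : ℕ} {A : Matrix (Fin n) (Fin n) ℝ} (hA : A.IsSymm)
    (u v : Fin n → ℝ) : u ⬝ᵥ (A *ᵥ v) = (A *ᵥ u) ⬝ᵥ v := by
  rw [Matrix.dotProduct_mulVec, ← Matrix.mulVec_transpose, hA.eq]

/-- If `Z'` is real symmetric and `Z''` is real symmetric positive definite,
then the block matrix `𝓛 = [[Z'' + Z'(Z'')⁻¹Z', Z'(Z'')⁻¹], [(Z'')⁻¹Z', (Z'')⁻¹]]`
is symmetric positive definite. -/
theorem stmt1 (n : ℕ) (hn : 1 ≤ n)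
    (Z' Z'' : Matrix (Fin n) (Fin n) ℝ)
    (hZ' : Z'.IsSymm) (hZ''sym : Z''.IsSymm) (hZ'' : Z''.PosDef)
    (𝓛 : Matrix (Fin n ⊕ Fin n) (Fin n ⊕ Fin n) ℝ)
    (h𝓛 : 𝓛 = Matrix.fromBlocks
      (Z'' + Z' * (Z'')⁻¹ * Z') (Z' * (Z'')⁻¹)
      ((Z'')⁻¹ * Z') (Z'')⁻¹) :
    𝓛.IsSymm ∧ 𝓛.PosDef := by
  set B := (Z'')⁻¹ with hB
  have hBsym : B.IsSymm := by
    rw [Matrix.IsSymm, hB, Matrix.transpose_nonsing_inv, hZ''sym.eq]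
  have hBpd : B.PosDef := hZ''.inv
  have hsymm : 𝓛.IsSymm := by
    simp only [Matrix.IsSymm, h𝓛, Matrix.fromBlocks_transpose, Matrix.transpose_add,
      Matrix.transpose_mul, hZ'.eq, hBsym.eq, hZ''sym.eq, Matrix.mul_assoc]
  refine ⟨hsymm, Matrix.posDef_iff_dotProduct_mulVec.mpr ⟨?_, ?_⟩⟩
  · rw [Matrix.IsHermitian]
    simpa using hsymm.eq
  · intro x hx
    set u : Fin n → ℝ := x ∘ Sum.inl with hu
    set v : Fin n → ℝ := x ∘ Sum.inr with hv
    have hxe : x = Sum.elim u v := by ext i; cases i <;> rfl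
    have key : star x ⬝ᵥ (𝓛 *ᵥ x)
        = u ⬝ᵥ (Z'' *ᵥ u) + (Z' *ᵥ u + v) ⬝ᵥ (B *ᵥ (Z' *ᵥ u + v)) := by
      rw [show star x = x from rfl, hxe, h𝓛, Matrix.fromBlocks_mulVec,
        sumElim_dotProduct_sumElim]
      simp only [Matrix.add_mulVec, Matrix.mulVec_add, ← Matrix.mulVec_mulVec,
        dotProduct_add, add_dotProduct, Sum.elim_comp_inl, Sum.elim_comp_inr]
      have h1 : u ⬝ᵥ (Z' *ᵥ (B *ᵥ (Z' *ᵥ u))) = (Z' *ᵥ u) ⬝ᵥ (B *ᵥ (Z' *ᵥ u)) :=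
        symm_dot hZ' _ _
      have h2 : u ⬝ᵥ (Z' *ᵥ (B *ᵥ v)) = (Z' *ᵥ u) ⬝ᵥ (B *ᵥ v) := symm_dot hZ' _ _
      have h3 : v ⬝ᵥ (B *ᵥ (Z' *ᵥ u)) = (Z' *ᵥ u) ⬝ᵥ (B *ᵥ v) := by
        rw [symm_dot hBsym, dotProduct_comm]
      rw [h1, h2, h3]
      ring
    rw [show (star x ⬝ᵥ (𝓛 *ᵥ x)) = _ from key]
    rcases eq_or_ne u 0 with hu0 | hu0
    · have hv0 : v ≠ 0 := by
        intro hv0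
        apply hx
        rw [hxe, hu0, hv0]; ext i; cases i <;> rfl
      have h2 : (0:ℝ) < (Z' *ᵥ u + v) ⬝ᵥ (B *ᵥ (Z' *ᵥ u + v)) := by
        have := hBpd.dotProduct_mulVec_pos (x := Z' *ᵥ u + v) (by simp [hu0, hv0])
        simpa using this
      have h1 : u ⬝ᵥ (Z'' *ᵥ u) = 0 := by simp [hu0]
      linarith
    · have h1 : (0:ℝ) < u ⬝ᵥ (Z'' *ᵥ u) := by
        have := hZ''.dotProduct_mulVec_pos hu0
        simpa using this
      have h2 : (0:ℝ) ≤ (Z' *ᵥ u + v) ⬝ᵥ (B *ᵥ (Z' *ᵥ u + v)) := by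
        have := hBpd.posSemidef.dotProduct_mulVec_nonneg (Z' *ᵥ u + v)
        simpa using this
      linarith
end

section
/- Let n ≥ 1 and let c₁, …, cₙ ∈ ℂ with Im c_j ≠ 0 for all j. Let Z' = diag(Re c₁, …, Re cₙ) and Z'' = diag(Im c₁, …, Im cₙ), and let 𝓛 be the 2n×2n block matrix [[Z'' + Z'(Z'')⁻¹Z', Z'(Z'')⁻¹], [(Z'')⁻¹Z', (Z'')⁻¹]]. Then for every λ ∈ ℝ, det(𝓛 − λI) = ∏_{j=1}^{n} ( λ² − ((1 + |c_j|²)/Im c_j)·λ + 1 ). -/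
open Matrix

def myE (n : ℕ) : Fin 2 × Fin n ≃ Fin n ⊕ Fin n where
  toFun p := if p.1 = 0 then .inl p.2 else .inr p.2
  invFun s := s.elim (fun j => (0, j)) (fun j => (1, j))
  left_inv := by rintro ⟨i, j⟩; fin_cases i <;> simp
  right_inv := by rintro (j | j) <;> simp

/-- For diagonal `Z = diag(c₁,…,cₙ)` with `Im cⱼ ≠ 0`, the characteristic
polynomial of the block matrix `𝓛` factors as
`det(𝓛 − λI) = ∏ⱼ (λ² − ((1 + |cⱼ|²)/Im cⱼ) λ + 1)`. -/
theorem stmt9 (n : ℕ) (hn : 1 ≤ n)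
    (c : Fin n → ℂ) (hc : ∀ j, (c j).im ≠ 0)
    (Z' Z'' : Matrix (Fin n) (Fin n) ℝ)
    (hZ' : Z' = Matrix.diagonal fun j => (c j).re)
    (hZ'' : Z'' = Matrix.diagonal fun j => (c j).im)
    (𝓛 : Matrix (Fin n ⊕ Fin n) (Fin n ⊕ Fin n) ℝ)
    (h𝓛 : 𝓛 = Matrix.fromBlocks
      (Z'' + Z' * (Z'')⁻¹ * Z') (Z' * (Z'')⁻¹)
      ((Z'')⁻¹ * Z') (Z'')⁻¹) :
    ∀ lam : ℝ,
      (𝓛 - lam • (1 : Matrix (Fin n ⊕ Fin n) (Fin n ⊕ Fin n) ℝ)).det =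
        ∏ j : Fin n,
          (lam ^ 2 - ((1 + ‖c j‖ ^ 2) / (c j).im) * lam + 1) := by
  intro lam
  set a : Fin n → ℝ := fun j => (c j).re with ha
  set b : Fin n → ℝ := fun j => (c j).im with hb
  have hinv : (Z'')⁻¹ = Matrix.diagonal fun j => (b j)⁻¹ := by
    rw [hZ'']
    apply Matrix.inv_eq_right_inv
    rw [Matrix.diagonal_mul_diagonal, ← Matrix.diagonal_one]
    exact congrArg Matrix.diagonal (funext fun j => mul_inv_cancel₀ (hc j))
  have h2 : 𝓛 = Matrix.fromBlocks
      (Matrix.diagonal fun j => b j + a j * (b j)⁻¹ * a j)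
      (Matrix.diagonal fun j => a j * (b j)⁻¹)
      (Matrix.diagonal fun j => (b j)⁻¹ * a j)
      (Matrix.diagonal fun j => (b j)⁻¹) := by
    rw [h𝓛, hinv, hZ', hZ'', Matrix.diagonal_mul_diagonal, Matrix.diagonal_mul_diagonal,
      Matrix.diagonal_mul_diagonal, Matrix.diagonal_add]
  set M : Fin n → Matrix (Fin 2) (Fin 2) ℝ := fun j =>
    !![b j + a j * (b j)⁻¹ * a j - lam, a j * (b j)⁻¹;
       (b j)⁻¹ * a j, (b j)⁻¹ - lam] with hM
  have hsub : (𝓛 - lam • (1 : Matrix (Fin n ⊕ Fin n) (Fin n ⊕ Fin n) ℝ)).submatrix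
      (myE n) (myE n) = Matrix.blockDiagonal M := by
    ext ⟨i, j⟩ ⟨i', j'⟩
    fin_cases i <;> fin_cases i' <;>
      simp [h2, myE, Matrix.blockDiagonal_apply, hM,
        Matrix.diagonal_apply, Matrix.one_apply] <;>
      by_cases h : j = j' <;> simp [h]
  have hdet := (𝓛 - lam • (1 : Matrix (Fin n ⊕ Fin n) (Fin n ⊕ Fin n) ℝ)).det_submatrix_equiv_self
    (myE n)
  rw [← hdet, hsub, Matrix.det_blockDiagonal]
  refine Finset.prod_congr rfl fun j _ => ?_
  have hbj : b j ≠ 0 := hc j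
  rw [hM, Matrix.det_fin_two_of]
  have habs : ‖c j‖ ^ 2 = a j ^ 2 + b j ^ 2 := by
    rw [Complex.sq_norm, Complex.normSq_apply]; ring
  rw [habs]
  rw [show (c j).im = b j from rfl]
  field_simp
  ring
end

section
/- Let n ≥ 1 and let c₁, …, cₙ ∈ ℂ with Re c_j ≠ 0 and Im c_j ≠ 0 for all j. Let Z' = diag(Re c₁, …, Re cₙ), Z'' = diag(Im c₁, …, Im cₙ), and let 𝓛 be the 2n×2n block matrix [[Z'' + Z'(Z'')⁻¹Z', Z'(Z'')⁻¹], [(Z'')⁻¹Z', (Z'')⁻¹]]. For each j set a_j = 1/Re c_j + (Im c_j)²/Re c_j + Re c_j and b_j = 2·Im c_j/Re c_j. Then a_j² − b_j² ≥ 0 for every j, and a real number λ is an eigenvalue of 𝓛 if and only if λ = (−a_j + √(a_j² − b_j²))/(−b_j) or λ = (−a_j − √(a_j² − b_j²))/(−b_j) for some j. -/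
open Matrix

namespace Stmt10Aux

/-- entries of the 2×2 blocks of `λ•1 - 𝓛` -/
noncomputable def pf (lam : ℝ) (z : ℂ) : ℝ := lam - (z.im + z.re * z.im⁻¹ * z.re)
noncomputable def qf (lam : ℝ) (z : ℂ) : ℝ := lam - z.im⁻¹
noncomputable def bf (z : ℂ) : ℝ := z.re * z.im⁻¹
noncomputable def ff (lam : ℝ) (z : ℂ) : ℝ := pf lam z * qf lam z - bf z ^ 2

lemma notUnit_iff (n : ℕ) (P Q B : Fin n → ℝ) (hB : ∀ j, B j ≠ 0) :
    ¬ IsUnit (fromBlocks (diagonal P) (diagonal fun j => -B j)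
      (diagonal fun j => -B j) (diagonal Q)) ↔
      ∃ j, P j * Q j - B j ^ 2 = 0 := by
  constructor
  · intro hnu
    by_contra hc
    push_neg at hc
    apply hnu
    apply IsUnit.of_mul_eq_one (fromBlocks
      (diagonal fun j => Q j / (P j * Q j - B j ^ 2))
      (diagonal fun j => B j / (P j * Q j - B j ^ 2))
      (diagonal fun j => B j / (P j * Q j - B j ^ 2))
      (diagonal fun j => P j / (P j * Q j - B j ^ 2)))
    rw [fromBlocks_multiply]
    ext (i | i) (k | k) <;>
      simp only [fromBlocks_apply₁₁, fromBlocks_apply₁₂, fromBlocks_apply₂₁,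
        fromBlocks_apply₂₂, Matrix.add_apply, diagonal_mul_diagonal, diagonal_apply,
        Pi.mul_apply, one_apply, Sum.inl.injEq, Sum.inr.injEq, reduceCtorEq,
        if_false] <;>
      split_ifs with h <;>
      first
        | (subst h; have hf := hc i; field_simp; try ring1)
        | simp
  · rintro ⟨j, hj⟩ hU
    set A := fromBlocks (diagonal P) (diagonal fun j => -B j)
      (diagonal fun j => -B j) (diagonal Q) with hA
    have hNM : (↑hU.unit⁻¹ : Matrix (Fin n ⊕ Fin n) (Fin n ⊕ Fin n) ℝ) * A = 1 := by
      have h := hU.unit.inv_mul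
      rwa [hU.unit_spec] at h
    set v : (Fin n ⊕ Fin n) → ℝ :=
      Sum.elim (Pi.single j (B j)) (Pi.single j (P j)) with hv
    have h1 : (diagonal P) *ᵥ Pi.single j (B j)
        + (diagonal fun j => -B j) *ᵥ Pi.single j (P j) = 0 := by
      rw [diagonal_mulVec_single, diagonal_mulVec_single, ← Pi.single_add]
      have : P j * B j + -B j * P j = 0 := by ring
      rw [this, Pi.single_zero]
    have h2 : (diagonal fun j => -B j) *ᵥ Pi.single j (B j)
        + (diagonal Q) *ᵥ Pi.single j (P j) = 0 := by
      rw [diagonal_mulVec_single, diagonal_mulVec_single, ← Pi.single_add]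
      have : -B j * B j + Q j * P j = 0 := by linear_combination hj
      rw [this, Pi.single_zero]
    have hAv : A *ᵥ v = 0 := by
      rw [hA, hv, fromBlocks_mulVec, Sum.elim_comp_inl, Sum.elim_comp_inr, h1, h2]
      ext (k | k) <;> simp
    have hv0 : v = 0 := by
      calc v = 1 *ᵥ v := (one_mulVec v).symm
        _ = ((↑hU.unit⁻¹ : Matrix _ _ ℝ) * A) *ᵥ v := by rw [hNM]
        _ = (↑hU.unit⁻¹ : Matrix _ _ ℝ) *ᵥ (A *ᵥ v) := (mulVec_mulVec _ _ _).symm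
        _ = 0 := by rw [hAv, mulVec_zero]
    have : v (Sum.inl j) = B j := by simp [hv]
    rw [hv0] at this
    exact hB j (by simpa using this.symm)

lemma quad_iff (a b e lam : ℝ) (hb : b ≠ 0) (hnn : 0 ≤ a ^ 2 - b ^ 2)
    (he : e = Real.sqrt (a ^ 2 - b ^ 2)) :
    b * lam ^ 2 - 2 * a * lam + b = 0 ↔
      (lam = (-a + e) / (-b) ∨ lam = (-a - e) / (-b)) := by
  have he2 : e ^ 2 = a ^ 2 - b ^ 2 := by rw [he]; exact Real.sq_sqrt hnn
  have key : (b * lam ^ 2 - 2 * a * lam + b = 0) ↔ (b * lam - a) ^ 2 = e ^ 2 := by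
    constructor
    · intro h
      linear_combination b * h - he2
    · intro h
      have hb2 : b * (b * lam ^ 2 - 2 * a * lam + b) = 0 := by
        linear_combination h + he2
      rcases mul_eq_zero.mp hb2 with h' | h'
      · exact absurd h' hb
      · exact h'
  rw [key, sq_eq_sq_iff_eq_or_eq_neg]
  have hbn : (-b) ≠ 0 := neg_ne_zero.mpr hb
  constructor
  · rintro (h | h)
    · right; rw [eq_div_iff hbn]; linarith
    · left; rw [eq_div_iff hbn]; linarith
  · rintro (h | h)
    · rw [eq_div_iff hbn] at h; right; linarith
    · rw [eq_div_iff hbn] at h; left; linarith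

lemma ff_iff (lam : ℝ) (z : ℂ) (hr : z.re ≠ 0) (hi : z.im ≠ 0) :
    ff lam z = 0 ↔
      (2 * z.im / z.re) * lam ^ 2
        - 2 * (1 / z.re + z.im ^ 2 / z.re + z.re) * lam + 2 * z.im / z.re = 0 := by
  have hcomb : (2 * z.im / z.re) * lam ^ 2
      - 2 * (1 / z.re + z.im ^ 2 / z.re + z.re) * lam + 2 * z.im / z.re
      = (2 * z.im / z.re) * ff lam z := by
    unfold ff pf qf bf
    field_simp
    ring
  have hne : 2 * z.im / z.re ≠ 0 := div_ne_zero (mul_ne_zero two_ne_zero hi) hr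
  rw [hcomb]
  constructor
  · intro h; rw [h, mul_zero]
  · intro h; exact (mul_eq_zero.mp h).resolve_left hne

end Stmt10Aux

open Stmt10Aux

/-- For diagonal `Z = diag(c₁,…,cₙ)` with `Re cⱼ ≠ 0` and `Im cⱼ ≠ 0`,
setting `aⱼ = 1/Re cⱼ + (Im cⱼ)²/Re cⱼ + Re cⱼ` and `bⱼ = 2 Im cⱼ / Re cⱼ`, one has
`aⱼ² − bⱼ² ≥ 0`, and `λ` is an eigenvalue of the block matrix `𝓛` iff
`λ = (−aⱼ ± √(aⱼ² − bⱼ²)) / (−bⱼ)` for some `j`. -/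
theorem stmt10 (n : ℕ) (hn : 1 ≤ n)
    (c : Fin n → ℂ) (hcre : ∀ j, (c j).re ≠ 0) (hcim : ∀ j, (c j).im ≠ 0)
    (Z' Z'' : Matrix (Fin n) (Fin n) ℝ)
    (hZ' : Z' = Matrix.diagonal fun j => (c j).re)
    (hZ'' : Z'' = Matrix.diagonal fun j => (c j).im)
    (𝓛 : Matrix (Fin n ⊕ Fin n) (Fin n ⊕ Fin n) ℝ)
    (h𝓛 : 𝓛 = Matrix.fromBlocks
      (Z'' + Z' * (Z'')⁻¹ * Z') (Z' * (Z'')⁻¹)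
      ((Z'')⁻¹ * Z') (Z'')⁻¹)
    (a b : Fin n → ℝ)
    (ha : ∀ j, a j = 1 / (c j).re + (c j).im ^ 2 / (c j).re + (c j).re)
    (hb : ∀ j, b j = 2 * (c j).im / (c j).re) :
    (∀ j, 0 ≤ a j ^ 2 - b j ^ 2) ∧
      ∀ lam : ℝ, lam ∈ spectrum ℝ 𝓛 ↔
        ∃ j, lam = (-(a j) + Real.sqrt (a j ^ 2 - b j ^ 2)) / (-(b j)) ∨
          lam = (-(a j) - Real.sqrt (a j ^ 2 - b j ^ 2)) / (-(b j)) := by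
  have key1 : ∀ j, 0 ≤ a j ^ 2 - b j ^ 2 := by
    intro j
    have hr := hcre j
    have h : a j ^ 2 - b j ^ 2 =
        ((((c j).im - 1) ^ 2 + (c j).re ^ 2) * (((c j).im + 1) ^ 2 + (c j).re ^ 2))
          / (c j).re ^ 2 := by
      rw [ha, hb]; field_simp; ring
    rw [h]; positivity
  refine ⟨key1, fun lam => ?_⟩
  have hinv : (Z'')⁻¹ = diagonal (fun j => ((c j).im)⁻¹) := by
    rw [hZ'']
    apply inv_eq_right_inv
    rw [diagonal_mul_diagonal]
    have h1 : (fun i => (c i).im * (c i).im⁻¹) = fun _ => (1 : ℝ) :=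
      funext fun i => mul_inv_cancel₀ (hcim i)
    rw [h1, diagonal_one]
  have hM : (algebraMap ℝ (Matrix (Fin n ⊕ Fin n) (Fin n ⊕ Fin n) ℝ)) lam - 𝓛 =
      fromBlocks (diagonal fun j => pf lam (c j))
        (diagonal fun j => -(bf (c j)))
        (diagonal fun j => -(bf (c j)))
        (diagonal fun j => qf lam (c j)) := by
    rw [h𝓛, hinv, hZ'', hZ']
    ext (i | i) (k | k) <;>
      simp only [Matrix.sub_apply, Matrix.algebraMap_matrix_apply,
        fromBlocks_apply₁₁, fromBlocks_apply₁₂, fromBlocks_apply₂₁, fromBlocks_apply₂₂,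
        Matrix.add_apply, diagonal_mul_diagonal, diagonal_apply, Pi.mul_apply,
        Sum.inl.injEq, Sum.inr.injEq, reduceCtorEq, if_false, Algebra.algebraMap_self,
        RingHom.id_apply] <;>
      split_ifs with h <;>
      first
        | (subst h; simp only [pf, qf, bf]; try ring1)
        | simp
  rw [spectrum.mem_iff, hM]
  have hBne : ∀ j, bf (c j) ≠ 0 := fun j =>
    mul_ne_zero (hcre j) (inv_ne_zero (hcim j))
  refine (Stmt10Aux.notUnit_iff n (fun j => pf lam (c j)) (fun j => qf lam (c j))
    (fun j => bf (c j)) hBne).trans ?_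
  refine exists_congr fun j => ?_
  have hbj : b j ≠ 0 := by
    rw [hb]; exact div_ne_zero (mul_ne_zero two_ne_zero (hcim j)) (hcre j)
  refine (Stmt10Aux.ff_iff lam (c j) (hcre j) (hcim j)).trans ?_
  rw [← ha j, ← hb j]
  exact Stmt10Aux.quad_iff (a j) (b j) _ lam hbj (key1 j) rfl
end
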